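/- Fix θ ∈ (0,π), let Q_u = ⋂_{m∈ℤ} H_m ⊂ tildeL with H_m = {(z,α,r) ∈ tildeL : r·cos(α+mθ) ≤ 1 or |α+mθ| ≥ π/2}, and let π(z,α,r) = (z, r·e^{iα}). Let g = (z₀,w₀) ∈ ℂ² with |z₀|² − |w₀|² = −1, set x = conj(z₀)/conj(w₀) (so |x| < 1), and let g act on ℂ² by the linear map (z',w') ↦ (conj(w₀)·z' + z₀·w', conj(z₀)·z' + w₀·w') (left multiplication in SU(1,1)). Then for every point (z,w) in the image g·π(Q_u): |w| − |z| ≤ |w − x·z| ≤ √(1−|x|²)/cos(θ/2). -/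

import Mathlib

open Real

/-- `tildeL = {(z,α,r) ∈ ℂ×ℝ×ℝ : 0 < r, |z| < r}`. -/
def tL : Set (ℂ × ℝ × ℝ) := {x | 0 < x.2.2 ∧ ‖x.1‖ < x.2.2}

/-- The covering map `π(z,α,r) = (z, r·e^{iα})` (defined on all of `ℂ×ℝ×ℝ`). -/
noncomputable def piAmb (x : ℂ × ℝ × ℝ) : ℂ × ℂ :=
  (x.1, (x.2.2 : ℂ) * Complex.exp ((x.2.1 : ℂ) * Complex.I))

/-- `H_m = {(z,α,r) ∈ tildeL : r·cos(α+mθ) ≤ 1 or |α+mθ| ≥ π/2}`. -/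
noncomputable def Hhalf (θ : ℝ) (m : ℤ) : Set (ℂ × ℝ × ℝ) :=
  {x ∈ tL | x.2.2 * Real.cos (x.2.1 + (m : ℝ) * θ) ≤ 1 ∨ π / 2 ≤ |x.2.1 + (m : ℝ) * θ|}

/-- The prismatic set `Q_u = ⋂_{m∈ℤ} H_m`. -/
noncomputable def Qu (θ : ℝ) : Set (ℂ × ℝ × ℝ) := ⋂ m : ℤ, Hhalf θ m

/-- Left multiplication by `g = (z₀,w₀) ∈ SU(1,1)` on `ℂ²`:
`(z',w') ↦ (conj(w₀)·z' + z₀·w', conj(z₀)·z' + w₀·w')`. -/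
noncomputable def lmul (z₀ w₀ : ℂ) (q : ℂ × ℂ) : ℂ × ℂ :=
  ((starRingEnd ℂ) w₀ * q.1 + z₀ * q.2, (starRingEnd ℂ) z₀ * q.1 + w₀ * q.2)

lemma exists_close (θ α : ℝ) (hθ : 0 < θ) : ∃ m : ℤ, |α + (m : ℝ) * θ| ≤ θ / 2 := by
  refine ⟨-round (α / θ), ?_⟩
  have h := abs_sub_round (α / θ)
  have he : α + ((-round (α / θ) : ℤ) : ℝ) * θ = (α / θ - round (α / θ)) * θ := by
    push_cast
    rw [sub_mul, div_mul_cancel₀ _ hθ.ne']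
    ring
  rw [he, abs_mul, abs_of_pos hθ]
  nlinarith [abs_nonneg (α / θ - (round (α / θ) : ℝ))]

theorem stmt16 (θ : ℝ) (hθ : 0 < θ) (hθπ : θ < π) (z₀ w₀ : ℂ)
    (hg : ‖z₀‖ ^ 2 - ‖w₀‖ ^ 2 = -1) :
    ∀ p ∈ lmul z₀ w₀ '' (piAmb '' Qu θ),
      ‖p.2‖ - ‖p.1‖ ≤ ‖p.2 - ((starRingEnd ℂ) z₀ / (starRingEnd ℂ) w₀) * p.1‖ ∧
      ‖p.2 - ((starRingEnd ℂ) z₀ / (starRingEnd ℂ) w₀) * p.1‖ ≤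
        Real.sqrt (1 - ‖(starRingEnd ℂ) z₀ / (starRingEnd ℂ) w₀‖ ^ 2) /
          Real.cos (θ / 2) := by
  have hw2 : ‖w₀‖ ^ 2 = ‖z₀‖ ^ 2 + 1 := by linarith
  have hwpos : 0 < ‖w₀‖ := by nlinarith [norm_nonneg w₀, sq_nonneg ‖z₀‖]
  have hw0 : w₀ ≠ 0 := by
    intro h; rw [h] at hwpos; simp at hwpos
  have hcw0 : (starRingEnd ℂ) w₀ ≠ 0 := by simpa using hw0
  set X := (starRingEnd ℂ) z₀ / (starRingEnd ℂ) w₀ with hX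
  have hXnorm : ‖X‖ = ‖z₀‖ / ‖w₀‖ := by
    rw [hX, norm_div, RCLike.norm_conj, RCLike.norm_conj]
  have hX1 : ‖X‖ ≤ 1 := by
    rw [hXnorm, div_le_one hwpos]; nlinarith
  have hcospos : 0 < Real.cos (θ / 2) := by
    apply Real.cos_pos_of_mem_Ioo
    constructor <;> [linarith [Real.pi_pos]; linarith]
  have h1 : w₀ * (starRingEnd ℂ) w₀ - z₀ * (starRingEnd ℂ) z₀ = 1 := by
    rw [Complex.mul_conj, Complex.mul_conj, ← Complex.ofReal_sub]
    norm_cast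
    simp only [Complex.normSq_eq_norm_sq]
    linarith
  rintro p ⟨q, ⟨x, hxQ, rfl⟩, rfl⟩
  obtain ⟨z, α, r⟩ := x
  obtain ⟨hr, -⟩ : (z, α, r) ∈ tL := ((Set.mem_iInter.mp hxQ 0) : _ ∈ Hhalf θ 0).1
  -- r ≤ 1 / cos (θ/2)
  obtain ⟨m, hm⟩ := exists_close θ α hθ
  have hcm := ((Set.mem_iInter.mp hxQ m) : _ ∈ Hhalf θ m).2
  have hrc : r * Real.cos (α + (m : ℝ) * θ) ≤ 1 := by
    rcases hcm with h | h
    · exact h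
    · exfalso; linarith [Real.pi_pos]
  have hcc : Real.cos (θ / 2) ≤ Real.cos (α + (m : ℝ) * θ) := by
    rw [← Real.cos_abs (α + (m : ℝ) * θ)]
    apply Real.cos_le_cos_of_nonneg_of_le_pi (abs_nonneg _) (by linarith) hm
  have hrle : r * Real.cos (θ / 2) ≤ 1 := by nlinarith
  -- algebra
  set w : ℂ := (r : ℂ) * Complex.exp ((α : ℂ) * Complex.I) with hwdef
  have hnw : ‖w‖ = r := by
    rw [hwdef, norm_mul, Complex.norm_exp_ofReal_mul_I, mul_one, Complex.norm_real,
      Real.norm_eq_abs, abs_of_pos hr]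
  have hp1 : (lmul z₀ w₀ (piAmb (z, α, r))).1 = (starRingEnd ℂ) w₀ * z + z₀ * w := rfl
  have hp2 : (lmul z₀ w₀ (piAmb (z, α, r))).2 = (starRingEnd ℂ) z₀ * z + w₀ * w := rfl
  have hkey : (lmul z₀ w₀ (piAmb (z, α, r))).2 - X * (lmul z₀ w₀ (piAmb (z, α, r))).1
      = w / (starRingEnd ℂ) w₀ := by
    rw [hp1, hp2, hX]
    field_simp
    linear_combination w * h1
  have hnormkey : ‖(lmul z₀ w₀ (piAmb (z, α, r))).2 - X * (lmul z₀ w₀ (piAmb (z, α, r))).1‖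
      = r / ‖w₀‖ := by
    rw [hkey, norm_div, RCLike.norm_conj, hnw]
  constructor
  · have h2 : ‖(lmul z₀ w₀ (piAmb (z, α, r))).2‖ ≤
        ‖(lmul z₀ w₀ (piAmb (z, α, r))).2 - X * (lmul z₀ w₀ (piAmb (z, α, r))).1‖
        + ‖X * (lmul z₀ w₀ (piAmb (z, α, r))).1‖ := by
      have := norm_add_le ((lmul z₀ w₀ (piAmb (z, α, r))).2 - X * (lmul z₀ w₀ (piAmb (z, α, r))).1)
        (X * (lmul z₀ w₀ (piAmb (z, α, r))).1)
      simpa using this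
    rw [norm_mul] at h2
    nlinarith [norm_nonneg (lmul z₀ w₀ (piAmb (z, α, r))).1]
  · rw [hnormkey]
    have hne : ‖w₀‖ ^ 2 ≠ 0 := by positivity
    have hs : Real.sqrt (1 - ‖X‖ ^ 2) = 1 / ‖w₀‖ := by
      have h3 : 1 - ‖X‖ ^ 2 = (1 / ‖w₀‖) ^ 2 := by
        rw [hXnorm, div_pow, div_pow, one_pow, eq_div_iff hne, sub_mul,
          div_mul_cancel₀ _ hne]
        linarith
      rw [h3, Real.sqrt_sq (by positivity)]
    rw [hs, div_div, div_le_div_iff₀ hwpos (by positivity)]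
    nlinarith [mul_le_mul_of_nonneg_right hrle hwpos.le]
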